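/- Input versus latent robustness (Theorem 2): Let Y, X, X_adv, T', T_adv be finite nonempty types. Let q be a strictly positive joint probability mass function on Y × X × X_adv such that Y → X → X_adv forms a Markov chain. Let q' be a strictly positive joint pmf on Y × X_adv × T' whose (Y, X_adv)-marginal agrees with that of q and such that Y → X_adv → T' forms a Markov chain; let r be a strictly positive joint pmf on Y × X × T_adv whose (Y, X)-marginal agrees with that of q and such that Y → X → T_adv forms a Markov chain. If the two distortions are equal, i.e., I_{q'}(X_adv;Y) − I_{q'}(Y;T') = I_r(X;Y) − I_r(Y;T_adv), then I_{q'}(Y;T') ≤ I_r(Y;T_adv). That is, with the same level of information distortion, perturbing the input (producing latent T') is at least as damaging to I(Y;·) as directly perturbing the latent representation (producing T_adv). -/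

import Mathlib

open scoped BigOperators

noncomputable section

namespace AdvLatent

variable {A B C : Type*} [Fintype A] [Fintype B] [Fintype C]

/-- Marginal of a joint pmf on the first two coordinates. -/
def m12 (p : A → B → C → ℝ) (a : A) (b : B) : ℝ := ∑ c, p a b c

/-- Marginal of a joint pmf on the first and third coordinates. -/
def m13 (p : A → B → C → ℝ) (a : A) (c : C) : ℝ := ∑ b, p a b c

/-- Marginal of a joint pmf on the last two coordinates. -/
def m23 (p : A → B → C → ℝ) (b : B) (c : C) : ℝ := ∑ a, p a b c

/-- Marginal of a joint pmf on the first coordinate. -/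
def m1 (p : A → B → C → ℝ) (a : A) : ℝ := ∑ b, ∑ c, p a b c

/-- Marginal of a joint pmf on the second coordinate. -/
def m2 (p : A → B → C → ℝ) (b : B) : ℝ := ∑ a, ∑ c, p a b c

/-- Marginal of a joint pmf on the third coordinate. -/
def m3 (p : A → B → C → ℝ) (c : C) : ℝ := ∑ a, ∑ b, p a b c

/-- Mutual information between the first and second coordinates:
`I(1;2) = ∑ p₁₂(a,b) log (p₁₂(a,b) / (p₁(a) p₂(b)))`. -/
def mi12 (p : A → B → C → ℝ) : ℝ :=
  ∑ a, ∑ b, m12 p a b * Real.log (m12 p a b / (m1 p a * m2 p b))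

/-- Mutual information between the first and third coordinates. -/
def mi13 (p : A → B → C → ℝ) : ℝ :=
  ∑ a, ∑ c, m13 p a c * Real.log (m13 p a c / (m1 p a * m3 p c))

/-- Mutual information between the second and third coordinates. -/
def mi23 (p : A → B → C → ℝ) : ℝ :=
  ∑ b, ∑ c, m23 p b c * Real.log (m23 p b c / (m2 p b * m3 p c))

/-- Conditional mutual information between the first and second coordinates
given the third: `I(1;2|3) = ∑ p(a,b,c) log (p₃(c) p(a,b,c) / (p₁₃(a,c) p₂₃(b,c)))`. -/
def cmi12g3 (p : A → B → C → ℝ) : ℝ :=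
  ∑ a, ∑ b, ∑ c, p a b c *
    Real.log (m3 p c * p a b c / (m13 p a c * m23 p b c))

/-- Mutual information between the pair (first, third) coordinates, regarded as a
single random variable, and the second coordinate. -/
def miPair13_2 (p : A → B → C → ℝ) : ℝ :=
  ∑ a, ∑ c, ∑ b, p a b c * Real.log (p a b c / (m13 p a c * m2 p b))

end AdvLatent

open AdvLatent

namespace AuxDPI

open AdvLatent Finset

variable {A B C D : Type*} [Fintype A] [Fintype B] [Fintype C] [Fintype D]

lemma m1_eq_sum_m12 (p : A → B → C → ℝ) (a : A) : m1 p a = ∑ b, m12 p a b := rfl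

lemma m2_eq_sum_m12 (p : A → B → C → ℝ) (b : B) : m2 p b = ∑ a, m12 p a b := rfl

lemma m1_eq_sum_m13 (p : A → B → C → ℝ) (a : A) : m1 p a = ∑ c, m13 p a c :=
  Finset.sum_comm

lemma m3_eq_sum_m13 (p : A → B → C → ℝ) (c : C) : m3 p c = ∑ a, m13 p a c := rfl

lemma m3_eq_sum_m23 (p : A → B → C → ℝ) (c : C) : m3 p c = ∑ b, m23 p b c :=
  Finset.sum_comm

/-- `mi12` depends only on the (1,2)-marginal. -/
lemma mi12_congr (p : A → B → C → ℝ) (p' : A → B → D → ℝ)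
    (h : ∀ a b, m12 p a b = m12 p' a b) : mi12 p = mi12 p' := by
  unfold mi12
  refine Finset.sum_congr rfl fun a _ => Finset.sum_congr rfl fun b _ => ?_
  rw [h, m1_eq_sum_m12, m1_eq_sum_m12, m2_eq_sum_m12, m2_eq_sum_m12]
  simp only [h]

/-- If the (1,2)-marginal of `p'` equals the (1,3)-marginal of `p`, then
`mi12 p' = mi13 p`. -/
lemma mi12_eq_mi13 (p' : A → C → D → ℝ) (p : A → B → C → ℝ)
    (h : ∀ a c, m12 p' a c = m13 p a c) : mi12 p' = mi13 p := by
  unfold mi12 mi13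
  refine Finset.sum_congr rfl fun a _ => Finset.sum_congr rfl fun c _ => ?_
  rw [h, m1_eq_sum_m12, m1_eq_sum_m13, m2_eq_sum_m12, m3_eq_sum_m13]
  simp only [h]

/-- Data processing inequality: for a Markov chain `1 → 2 → 3`,
`I(1;3) ≤ I(1;2)`. -/
lemma dpi [Nonempty A] [Nonempty B] [Nonempty C]
    (p : A → B → C → ℝ) (hpos : ∀ a b c, 0 < p a b c)
    (hsum : ∑ a, ∑ b, ∑ c, p a b c = 1)
    (hmk : ∀ a b c, p a b c * m2 p b = m12 p a b * m23 p b c) :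
    mi13 p ≤ mi12 p := by
  have h12 : ∀ a b, 0 < m12 p a b := fun a b =>
    Finset.sum_pos (fun c _ => hpos a b c) Finset.univ_nonempty
  have h13 : ∀ a c, 0 < m13 p a c := fun a c =>
    Finset.sum_pos (fun b _ => hpos a b c) Finset.univ_nonempty
  have h23 : ∀ b c, 0 < m23 p b c := fun b c =>
    Finset.sum_pos (fun a _ => hpos a b c) Finset.univ_nonempty
  have h1 : ∀ a, 0 < m1 p a := fun a =>
    Finset.sum_pos (fun b _ => Finset.sum_pos (fun c _ => hpos a b c) Finset.univ_nonempty)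
      Finset.univ_nonempty
  have h2 : ∀ b, 0 < m2 p b := fun b =>
    Finset.sum_pos (fun a _ => Finset.sum_pos (fun c _ => hpos a b c) Finset.univ_nonempty)
      Finset.univ_nonempty
  have h3 : ∀ c, 0 < m3 p c := fun c =>
    Finset.sum_pos (fun a _ => Finset.sum_pos (fun b _ => hpos a b c) Finset.univ_nonempty)
      Finset.univ_nonempty
  -- expand both MIs as triple sums
  have e12 : mi12 p = ∑ a, ∑ b, ∑ c,
      p a b c * Real.log (m12 p a b / (m1 p a * m2 p b)) := by
    unfold mi12
    refine Finset.sum_congr rfl fun a _ => Finset.sum_congr rfl fun b _ => ?_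
    rw [show m12 p a b * Real.log (m12 p a b / (m1 p a * m2 p b))
        = (∑ c, p a b c) * Real.log (m12 p a b / (m1 p a * m2 p b)) from rfl,
      Finset.sum_mul]
  have e13 : mi13 p = ∑ a, ∑ b, ∑ c,
      p a b c * Real.log (m13 p a c / (m1 p a * m3 p c)) := by
    unfold mi13
    refine Finset.sum_congr rfl fun a _ => ?_
    rw [Finset.sum_comm (f := fun b c => p a b c * Real.log (m13 p a c / (m1 p a * m3 p c)))]
    refine Finset.sum_congr rfl fun c _ => ?_
    rw [show m13 p a c * Real.log (m13 p a c / (m1 p a * m3 p c))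
        = (∑ b, p a b c) * Real.log (m13 p a c / (m1 p a * m3 p c)) from rfl,
      Finset.sum_mul]
  set s : A → B → C → ℝ := fun a b c => m13 p a c * m23 p b c / m3 p c with hs
  -- pointwise bound
  have key : ∀ a b c,
      p a b c * Real.log (m13 p a c / (m1 p a * m3 p c))
        ≤ p a b c * Real.log (m12 p a b / (m1 p a * m2 p b)) + (s a b c - p a b c) := by
    intro a b c
    have hp := hpos a b c
    have hsp : 0 < s a b c := by
      have := h13 a c; have := h23 b c; have := h3 c
      positivity
    have hrel : m13 p a c / (m1 p a * m3 p c)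
        = (m12 p a b / (m1 p a * m2 p b)) * (s a b c / p a b c) := by
      have hmk' : m12 p a b * m23 p b c = p a b c * m2 p b := (hmk a b c).symm
      show m13 p a c / (m1 p a * m3 p c)
          = m12 p a b / (m1 p a * m2 p b) * (m13 p a c * m23 p b c / m3 p c / p a b c)
      have h1' := (h1 a).ne'
      have h2' := (h2 b).ne'
      have h3' := (h3 c).ne'
      have hp' := hp.ne'
      have h3c := (h3 c).ne'
      field_simp
      linear_combination (m13 p a c) * hmk a b c
    have hlog : Real.log (m13 p a c / (m1 p a * m3 p c))
        = Real.log (m12 p a b / (m1 p a * m2 p b)) + Real.log (s a b c / p a b c) := by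
      rw [hrel, Real.log_mul (div_pos (h12 a b) (mul_pos (h1 a) (h2 b))).ne' (div_pos hsp hp).ne']
    have hlt : Real.log (s a b c / p a b c) ≤ s a b c / p a b c - 1 :=
      Real.log_le_sub_one_of_pos (by positivity)
    have : p a b c * Real.log (s a b c / p a b c) ≤ s a b c - p a b c := by
      have := mul_le_mul_of_nonneg_left hlt hp.le
      calc p a b c * Real.log (s a b c / p a b c)
          ≤ p a b c * (s a b c / p a b c - 1) := this
        _ = s a b c - p a b c := by field_simp
    rw [hlog, mul_add]
    linarith
  -- total mass of s is 1
  have hS : ∑ a, ∑ b, ∑ c, s a b c = 1 := by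
    have hb : ∀ a, ∑ b, ∑ c, s a b c = ∑ c, m13 p a c := by
      intro a
      rw [Finset.sum_comm]
      refine Finset.sum_congr rfl fun c _ => ?_
      have : ∑ b, s a b c = m13 p a c / m3 p c * ∑ b, m23 p b c := by
        rw [Finset.mul_sum]
        refine Finset.sum_congr rfl fun b _ => ?_
        rw [hs]; ring
      rw [this, ← m3_eq_sum_m23, div_mul_cancel₀ _ (h3 c).ne']
    calc ∑ a, ∑ b, ∑ c, s a b c = ∑ a, ∑ c, m13 p a c := by
          exact Finset.sum_congr rfl fun a _ => hb a
      _ = ∑ a, ∑ b, ∑ c, p a b c :=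
          Finset.sum_congr rfl fun a _ => (m1_eq_sum_m13 p a).symm
      _ = 1 := hsum
  -- sum up
  rw [e12, e13]
  have hsumle : (∑ a, ∑ b, ∑ c, p a b c * Real.log (m13 p a c / (m1 p a * m3 p c)))
      ≤ ∑ a, ∑ b, ∑ c,
        (p a b c * Real.log (m12 p a b / (m1 p a * m2 p b)) + (s a b c - p a b c)) := by
    refine Finset.sum_le_sum fun a _ => Finset.sum_le_sum fun b _ =>
      Finset.sum_le_sum fun c _ => key a b c
  calc (∑ a, ∑ b, ∑ c, p a b c * Real.log (m13 p a c / (m1 p a * m3 p c)))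
      ≤ ∑ a, ∑ b, ∑ c,
        (p a b c * Real.log (m12 p a b / (m1 p a * m2 p b)) + (s a b c - p a b c)) := hsumle
    _ = (∑ a, ∑ b, ∑ c, p a b c * Real.log (m12 p a b / (m1 p a * m2 p b)))
        + ((∑ a, ∑ b, ∑ c, s a b c) - ∑ a, ∑ b, ∑ c, p a b c) := by
        simp [Finset.sum_add_distrib, Finset.sum_sub_distrib]
    _ = ∑ a, ∑ b, ∑ c, p a b c * Real.log (m12 p a b / (m1 p a * m2 p b)) := by
        rw [hS, hsum]; ring

end AuxDPI

/-- **Input versus latent robustness.** Let `q` be a strictly positive joint pmf on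
`Y × X × Xadv` forming a Markov chain `Y → X → Xadv`; let `q'` be a strictly positive
joint pmf on `Y × Xadv × T'` whose `(Y, Xadv)`-marginal agrees with that of `q`, forming
a Markov chain `Y → Xadv → T'`; and let `r` be a strictly positive joint pmf on
`Y × X × Tadv` whose `(Y, X)`-marginal agrees with that of `q`, forming a Markov chain
`Y → X → Tadv`. If the two distortions agree, i.e.
`I_{q'}(Xadv;Y) − I_{q'}(Y;T') = I_r(X;Y) − I_r(Y;Tadv)`, then
`I_{q'}(Y;T') ≤ I_r(Y;Tadv)`. -/
theorem input_vs_latent_robustness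
    {Y X Xadv T' Tadv : Type*}
    [Fintype Y] [Fintype X] [Fintype Xadv] [Fintype T'] [Fintype Tadv]
    [Nonempty Y] [Nonempty X] [Nonempty Xadv] [Nonempty T'] [Nonempty Tadv]
    (q : Y → X → Xadv → ℝ)
    (q' : Y → Xadv → T' → ℝ)
    (r : Y → X → Tadv → ℝ)
    (hq_pos : ∀ y x xa, 0 < q y x xa)
    (hq_sum : ∑ y, ∑ x, ∑ xa, q y x xa = 1)
    (hq_markov : ∀ y x xa, q y x xa * m2 q x = m12 q y x * m23 q x xa)
    (hq'_pos : ∀ y xa t, 0 < q' y xa t)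
    (hq'_sum : ∑ y, ∑ xa, ∑ t, q' y xa t = 1)
    (hq'_markov : ∀ y xa t, q' y xa t * m2 q' xa = m12 q' y xa * m23 q' xa t)
    (hq'_marg : ∀ y xa, m12 q' y xa = m13 q y xa)
    (hr_pos : ∀ y x t, 0 < r y x t)
    (hr_sum : ∑ y, ∑ x, ∑ t, r y x t = 1)
    (hr_markov : ∀ y x t, r y x t * m2 r x = m12 r y x * m23 r x t)
    (hr_marg : ∀ y x, m12 r y x = m12 q y x)
    (hdistortion : mi12 q' - mi13 q' = mi12 r - mi13 r) :
    mi13 q' ≤ mi13 r := by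
  have h1 : mi12 q' = mi13 q := AuxDPI.mi12_eq_mi13 q' q hq'_marg
  have h2 : mi12 r = mi12 q := AuxDPI.mi12_congr r q hr_marg
  have h3 : mi13 q ≤ mi12 q := AuxDPI.dpi q hq_pos hq_sum hq_markov
  linarith
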